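/- Assume f(x) > 0 for all x ∈ (π̲, π̄) and t_s ≥ 3 t_k. Define ψ₂(p) = (t_s + t_k) F(p) − (t_s + t_k) F(p)² − t_k. Then there exists exactly one p̂ ∈ [π̲, π̄] with F(p̂) ≥ 1/2 and ψ₂(p̂) = 0. -/
import Mathlib

/-- If `f > 0` on `(π̲, π̄)` and `t_s ≥ 3 t_k`, then
`ψ₂(p) = (t_s + t_k) F(p) − (t_s + t_k) F(p)² − t_k` has exactly one root `p̂` in
`[π̲, π̄]` with `F(p̂) ≥ 1/2`. -/
theorem stmt_8
    (πlo πhi : ℝ) (f F : ℝ → ℝ)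
    (hπlo : 0 ≤ πlo) (hlt : πlo < πhi)
    (hcont : ContinuousOn f (Set.Icc πlo πhi))
    (hnn : ∀ x ∈ Set.Icc πlo πhi, 0 ≤ f x)
    (hanti : ∀ x ∈ Set.Icc πlo πhi, ∀ y ∈ Set.Icc πlo πhi, x ≤ y → f y ≤ f x)
    (hone : (∫ x in πlo..πhi, f x) = 1)
    (hF : ∀ p, F p = ∫ x in πlo..p, f x)
    (hpos : ∀ x ∈ Set.Ioo πlo πhi, 0 < f x)
    (tk ts : ℝ) (htk : 0 < tk) (hts : 0 < ts) (h3 : 3 * tk ≤ ts)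
    (ψ₂ : ℝ → ℝ)
    (hψ₂ : ∀ p, ψ₂ p = (ts + tk) * F p - (ts + tk) * (F p) ^ 2 - tk) :
    ∃! phat : ℝ, phat ∈ Set.Icc πlo πhi ∧ 1 / 2 ≤ F phat ∧ ψ₂ phat = 0 := by
  have hs : 0 < ts + tk := by positivity
  have h4 : 4 * tk ≤ ts + tk := by linarith
  set d : ℝ := 1 - 4 * tk / (ts + tk) with hddef
  have hd0 : 0 ≤ d := by
    rw [hddef, sub_nonneg, div_le_one hs]; linarith
  have hd1 : d < 1 := by
    rw [hddef]; have : 0 < 4 * tk / (ts + tk) := by positivity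
    linarith
  set c : ℝ := (1 + Real.sqrt d) / 2 with hcdef
  have hsq : Real.sqrt d ^ 2 = d := Real.sq_sqrt hd0
  have hsqnn : 0 ≤ Real.sqrt d := Real.sqrt_nonneg d
  have hsqlt : Real.sqrt d < 1 := by
    nlinarith [hsq]
  have hc_half : (1:ℝ)/2 ≤ c := by rw [hcdef]; linarith
  have hc_lt : c < 1 := by rw [hcdef]; linarith
  -- quadratic characterization
  have hquad : ∀ u : ℝ, (1/2 ≤ u ∧ (ts + tk) * u - (ts + tk) * u ^ 2 - tk = 0) ↔ u = c := by
    intro u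
    constructor
    · rintro ⟨hu, heq⟩
      have hkey : (2*u - 1)^2 = d := by
        have : (ts + tk) * ((2*u-1)^2) = (ts + tk) * d := by
          rw [hddef]; field_simp; nlinarith
        exact mul_left_cancel₀ (ne_of_gt hs) this
      have h2 : 2*u - 1 = Real.sqrt d := by
        nlinarith [hsq, hsqnn]
      rw [hcdef]; linarith
    · rintro rfl
      refine ⟨hc_half, ?_⟩
      have : (2*c - 1)^2 = d :=
        calc (2*c - 1)^2 = Real.sqrt d ^ 2 := by rw [hcdef]; ring
        _ = d := hsq
      rw [hddef] at this
      field_simp at this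
      nlinarith
  -- properties of F
  have hint : ∀ a ∈ Set.Icc πlo πhi, ∀ b ∈ Set.Icc πlo πhi,
      IntervalIntegrable f MeasureTheory.volume a b := by
    intro a ha b hb
    exact (hcont.mono (Set.uIcc_subset_Icc ha hb)).intervalIntegrable
  have hFlo : F πlo = 0 := by rw [hF]; simp
  have hFhi : F πhi = 1 := by rw [hF]; exact hone
  have hFc : ContinuousOn F (Set.Icc πlo πhi) := by
    have := intervalIntegral.continuousOn_primitive_interval
      (f := f) (a := πlo) (b := πhi) (μ := MeasureTheory.volume)
      (by rw [Set.uIcc_of_le hlt.le]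
          exact (hcont.mono Set.Subset.rfl).integrableOn_compact isCompact_Icc)
    rw [Set.uIcc_of_le hlt.le] at this
    exact this.congr (fun p _ => hF p)
  have hFmono : ∀ x ∈ Set.Icc πlo πhi, ∀ y ∈ Set.Icc πlo πhi, x < y → F x < F y := by
    intro x hx y hy hxy
    have hFdiff : F y - F x = ∫ t in x..y, f t := by
      rw [hF, hF, ← intervalIntegral.integral_add_adjacent_intervals
        (hint πlo (Set.left_mem_Icc.2 hlt.le) x hx) (hint x hx y hy)]
      ring
    have hposxy : 0 < ∫ t in x..y, f t := by
      apply intervalIntegral.intervalIntegral_pos_of_pos_on (hint x hx y hy) _ hxy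
      intro t ht
      exact hpos t ⟨lt_of_le_of_lt hx.1 ht.1, lt_of_lt_of_le ht.2 hy.2⟩
    linarith
  -- existence: IVT
  have hmem : c ∈ Set.Icc (F πlo) (F πhi) := by
    rw [hFlo, hFhi]; constructor <;> [linarith; linarith]
  obtain ⟨phat, hphat, hFphat⟩ := intermediate_value_Icc hlt.le hFc hmem
  have hcond : ∀ p, (p ∈ Set.Icc πlo πhi ∧ 1/2 ≤ F p ∧ ψ₂ p = 0) ↔
      (p ∈ Set.Icc πlo πhi ∧ F p = c) := by
    intro p
    rw [hψ₂]
    constructor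
    · rintro ⟨hp, h1, h2⟩
      exact ⟨hp, (hquad (F p)).1 ⟨h1, by linarith⟩⟩
    · rintro ⟨hp, hfp⟩
      obtain ⟨h1, h2⟩ := (hquad (F p)).2 hfp
      exact ⟨hp, h1, by linarith⟩
  refine ⟨phat, (hcond phat).2 ⟨hphat, hFphat⟩, ?_⟩
  intro q hq
  rw [hcond q] at hq
  obtain ⟨hq1, hq2⟩ := hq
  by_contra hne
  rcases lt_or_gt_of_ne hne with h | h
  · have := hFmono q hq1 phat hphat h; rw [hq2, hFphat] at this; exact lt_irrefl _ this
  · have := hFmono phat hphat q hq1 h; rw [hq2, hFphat] at this; exact lt_irrefl _ this
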